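/- For natural numbers m, n, r with r ≤ m + n, the sum ∑_{k=0}^{r} 2^{-k} · C(n,k)·C(m,r-k)/C(m+n,r) is at most 1, with equality if and only if n = 0 or r = 0. -/
import Mathlib


open Finset

lemma vand (m n r : ℕ) :
    ∑ k ∈ Finset.range (r + 1), n.choose k * m.choose (r - k) = (m + n).choose r := by
  rw [add_comm m n, Nat.add_choose_eq]
  rw [Finset.Nat.sum_antidiagonal_eq_sum_range_succ_mk]

/-- for `r ≤ m + n`, the sum
`∑_{k=0}^r 2^{-k} C(n,k)C(m,r-k)/C(m+n,r)` is at most `1`, with equality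
iff `n = 0` or `r = 0`. -/
theorem stmt1 (m n r : ℕ) (hr : r ≤ m + n) :
    (∑ k ∈ Finset.range (r + 1),
        (2 : ℝ) ^ (-(k : ℝ)) * (n.choose k * m.choose (r - k) : ℝ)
          / ((m + n).choose r : ℝ)) ≤ 1
      ∧ ((∑ k ∈ Finset.range (r + 1),
            (2 : ℝ) ^ (-(k : ℝ)) * (n.choose k * m.choose (r - k) : ℝ)
              / ((m + n).choose r : ℝ)) = 1 ↔ n = 0 ∨ r = 0) := by
  have hC : (0 : ℝ) < ((m + n).choose r : ℝ) := by
    exact_mod_cast Nat.choose_pos hr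
  set c : ℕ → ℝ := fun k => (n.choose k * m.choose (r - k) : ℝ) with hc
  set w : ℕ → ℝ := fun k => (2 : ℝ) ^ (-(k : ℝ)) with hw
  have hcnn : ∀ k, 0 ≤ c k := fun k => by positivity
  have hw1 : ∀ k, w k ≤ 1 := fun k => by
    apply Real.rpow_le_one_of_one_le_of_nonpos one_le_two
    simp
  have hws : ∀ k, k ≠ 0 → w k < 1 := fun k hk => by
    apply Real.rpow_lt_one_of_one_lt_of_neg one_lt_two
    simpa using Nat.pos_of_ne_zero hk
  have hT : ∑ k ∈ Finset.range (r + 1), c k = ((m + n).choose r : ℝ) := by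
    rw [← vand m n r]
    push_cast
    rfl
  have hle : ∀ k ∈ Finset.range (r + 1), w k * c k ≤ c k := fun k _ =>
    mul_le_of_le_one_left (hcnn k) (hw1 k)
  have hS : ∑ k ∈ Finset.range (r + 1), w k * c k ≤ ((m + n).choose r : ℝ) := by
    rw [← hT]; exact Finset.sum_le_sum hle
  have hdiv : (∑ k ∈ Finset.range (r + 1), w k * c k / ((m + n).choose r : ℝ))
      = (∑ k ∈ Finset.range (r + 1), w k * c k) / ((m + n).choose r : ℝ) := by
    rw [Finset.sum_div]
  constructor
  · rw [hdiv, div_le_one hC]; exact hS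
  · rw [hdiv, div_eq_one_iff_eq hC.ne', ← hT]
    constructor
    · intro heq
      by_contra h
      push_neg at h
      obtain ⟨hn, hrr⟩ := h
      have hn1 : 1 ≤ n := Nat.pos_of_ne_zero hn
      have hr1 : 1 ≤ r := Nat.pos_of_ne_zero hrr
      set k0 : ℕ := if r ≤ m then 1 else r - m with hk0
      have hk0ne : k0 ≠ 0 := by
        rw [hk0]; split
        · exact one_ne_zero
        · next h' => exact Nat.sub_ne_zero_of_lt (lt_of_not_ge h')
      have hk0mem : k0 ∈ Finset.range (r + 1) := by
        rw [Finset.mem_range, Nat.lt_succ_iff, hk0]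
        split
        · exact hr1
        · exact Nat.sub_le r m
      have hcpos : 0 < c k0 := by
        rw [hc, hk0]
        split
        · next h' =>
          simp only
          have h1 : 0 < n.choose 1 := Nat.choose_pos hn1
          have h2 : 0 < m.choose (r - 1) := Nat.choose_pos (le_trans (Nat.sub_le r 1) h')
          positivity
        · next h' =>
          have hm : m ≤ r := le_of_not_ge h'
          simp only
          have h1 : 0 < n.choose (r - m) := Nat.choose_pos (by omega)
          have h2 : 0 < m.choose (r - (r - m)) := by
            rw [Nat.sub_sub_self hm]; exact Nat.choose_pos le_rfl
          positivity
      have hstrict : w k0 * c k0 < c k0 := by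
        have := hws k0 hk0ne
        nlinarith
      have hlt : ∑ k ∈ Finset.range (r + 1), w k * c k
          < ∑ k ∈ Finset.range (r + 1), c k :=
        Finset.sum_lt_sum hle ⟨k0, hk0mem, hstrict⟩
      linarith
    · rintro (hn | hrr)
      · apply Finset.sum_congr rfl
        intro k _
        rcases Nat.eq_zero_or_pos k with hk | hk
        · simp [hk, hw]
        · have : n.choose k = 0 := by
            rw [hn]; exact Nat.choose_eq_zero_of_lt hk
          simp [hc, this]
      · subst hrr
        simp [hw, hc]
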